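/- arXiv:math/0406036 — 2 statements merged into one kernel-verified Lean document; each statement's English description precedes it below -/
import Mathlib

section
/- Let H be a Hilbert space and let V₁, V₂ : K → H be isometries with orthogonal ranges, and let V : K → H be an isometry. For 0 < r < 1/√2, set T_i = V_i + rV for i = 1,2 and δ = 1 − r√2 > 0. Then for all ξ, η ∈ K, ‖T₁ξ − T₂η‖ ≥ δ·‖(ξ,η)‖, where ‖(ξ,η)‖ = (‖ξ‖² + ‖η‖²)^{1/2}. Consequently, Ran(T₁) ∩ Ran(T₂) = {0} and Ran(T₁) + Ran(T₂) is closed. -/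
/-- Let `V₁, V₂ : K → H` be isometries with orthogonal ranges and `V : K → H` an isometry.
For `0 < r < 1/√2`, set `Tᵢ = Vᵢ + r•V` and `δ = 1 - r√2 > 0`.  Then
`‖T₁ξ - T₂η‖ ≥ δ·(‖ξ‖² + ‖η‖²)^{1/2}` for all `ξ η`; consequently
`Ran T₁ ∩ Ran T₂ = {0}` and `Ran T₁ + Ran T₂` is closed. -/
theorem stmt_3 {K H : Type*} [NormedAddCommGroup K] [InnerProductSpace ℂ K]
    [NormedAddCommGroup H] [InnerProductSpace ℂ H] [CompleteSpace K] [CompleteSpace H]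
    (V₁ V₂ V : K →L[ℂ] H)
    (h1 : ∀ x, ‖V₁ x‖ = ‖x‖) (h2 : ∀ x, ‖V₂ x‖ = ‖x‖) (hV : ∀ x, ‖V x‖ = ‖x‖)
    (horth : ∀ ξ η : K, (inner ℂ (V₁ ξ) (V₂ η) : ℂ) = 0)
    (r : ℝ) (hr0 : 0 < r) (hr : r < 1 / Real.sqrt 2) :
    (∀ ξ η : K, (1 - r * Real.sqrt 2) * Real.sqrt (‖ξ‖ ^ 2 + ‖η‖ ^ 2) ≤
        ‖(V₁ + (r : ℂ) • V) ξ - (V₂ + (r : ℂ) • V) η‖) ∧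
    (∀ x : H, x ∈ Set.range (V₁ + (r : ℂ) • V) → x ∈ Set.range (V₂ + (r : ℂ) • V) → x = 0) ∧
    IsClosed {x : H | ∃ a b : K, x = (V₁ + (r : ℂ) • V) a + (V₂ + (r : ℂ) • V) b} := by
  have sqrt2_pos : (0:ℝ) < Real.sqrt 2 := Real.sqrt_pos.mpr (by norm_num)
  have hδ : 0 < 1 - r * Real.sqrt 2 := by
    have : r * Real.sqrt 2 < (1 / Real.sqrt 2) * Real.sqrt 2 := by
      exact mul_lt_mul_of_pos_right hr sqrt2_pos
    rw [one_div, inv_mul_cancel₀ (ne_of_gt sqrt2_pos)] at this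
    linarith
  set δ := 1 - r * Real.sqrt 2 with hδdef
  -- key inequality
  have key : ∀ ξ η : K, δ * Real.sqrt (‖ξ‖ ^ 2 + ‖η‖ ^ 2) ≤
      ‖(V₁ + (r : ℂ) • V) ξ - (V₂ + (r : ℂ) • V) η‖ := by
    intro ξ η
    set N := Real.sqrt (‖ξ‖ ^ 2 + ‖η‖ ^ 2) with hN
    have hNsq : N ^ 2 = ‖ξ‖ ^ 2 + ‖η‖ ^ 2 :=
      Real.sq_sqrt (by positivity)
    have hNnonneg : 0 ≤ N := Real.sqrt_nonneg _
    -- ‖V₁ ξ - V₂ η‖ = N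
    have hA : ‖V₁ ξ - V₂ η‖ = N := by
      have h := @norm_sub_sq ℂ _ _ _ _ (V₁ ξ) (V₂ η)
      rw [horth ξ η] at h
      simp only [map_zero, mul_zero, sub_zero] at h
      rw [h1, h2] at h
      rw [hN, ← h]
      exact (Real.sqrt_sq (norm_nonneg _)).symm
    -- ‖ξ - η‖ ≤ √2 * N
    have hsub : ‖ξ - η‖ ≤ Real.sqrt 2 * N := by
      have h1' : ‖ξ - η‖ ≤ ‖ξ‖ + ‖η‖ := norm_sub_le _ _
      have h2' : ‖ξ‖ + ‖η‖ ≤ Real.sqrt 2 * N := by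
        rw [hN, ← Real.sqrt_mul (by norm_num : (0:ℝ) ≤ 2)]
        have h3' := Real.sqrt_le_sqrt (show (‖ξ‖ + ‖η‖)^2 ≤ 2 * (‖ξ‖^2 + ‖η‖^2) by
          nlinarith [sq_nonneg (‖ξ‖ - ‖η‖)])
        rwa [Real.sqrt_sq (by positivity)] at h3'
      linarith
    -- decomposition
    have hdec : (V₁ + (r : ℂ) • V) ξ - (V₂ + (r : ℂ) • V) η
        = (V₁ ξ - V₂ η) + (r : ℂ) • (V (ξ - η)) := by
      simp only [ContinuousLinearMap.add_apply, ContinuousLinearMap.smul_apply, map_sub]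
      module
    have hB : ‖(r : ℂ) • (V (ξ - η))‖ = r * ‖ξ - η‖ := by
      rw [norm_smul, hV]
      simp [abs_of_pos hr0]
    have hlow : ‖V₁ ξ - V₂ η‖ - ‖(r : ℂ) • (V (ξ - η))‖ ≤
        ‖(V₁ ξ - V₂ η) + (r : ℂ) • (V (ξ - η))‖ := by
      have := norm_le_add_norm_add (V₁ ξ - V₂ η) ((r : ℂ) • (V (ξ - η)))
      linarith
    rw [hdec]
    have : N - r * (Real.sqrt 2 * N) ≤ ‖(V₁ ξ - V₂ η) + (r : ℂ) • (V (ξ - η))‖ := by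
      have hrs : r * ‖ξ - η‖ ≤ r * (Real.sqrt 2 * N) :=
        mul_le_mul_of_nonneg_left hsub (le_of_lt hr0)
      rw [hA, hB] at hlow
      linarith
    calc δ * N = N - r * (Real.sqrt 2 * N) := by ring
    _ ≤ _ := this
  refine ⟨key, ?_, ?_⟩
  · -- intersection trivial
    rintro x ⟨a, ha⟩ ⟨b, hb⟩
    have h0 : ‖(V₁ + (r : ℂ) • V) a - (V₂ + (r : ℂ) • V) b‖ = 0 := by
      rw [ha, hb, sub_self, norm_zero]
    have := key a b
    rw [h0] at this
    have hNle : Real.sqrt (‖a‖ ^ 2 + ‖b‖ ^ 2) ≤ 0 := by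
      by_contra hc
      push_neg at hc
      nlinarith
    have hN0 : Real.sqrt (‖a‖ ^ 2 + ‖b‖ ^ 2) = 0 :=
      le_antisymm hNle (Real.sqrt_nonneg _)
    have hab : ‖a‖ ^ 2 + ‖b‖ ^ 2 ≤ 0 := Real.sqrt_eq_zero'.mp hN0
    have ha0 : a = 0 := by
      have : ‖a‖ = 0 := by nlinarith [sq_nonneg ‖a‖, sq_nonneg ‖b‖]
      exact norm_eq_zero.mp this
    rw [← ha, ha0, map_zero]
  · -- closed range
    set T₁ := V₁ + (r : ℂ) • V
    set T₂ := V₂ + (r : ℂ) • V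
    set Φ : (K × K) →L[ℂ] H :=
      T₁.comp (ContinuousLinearMap.fst ℂ K K) + T₂.comp (ContinuousLinearMap.snd ℂ K K) with hΦ
    have hΦapp : ∀ p : K × K, Φ p = T₁ p.1 + T₂ p.2 := fun p => rfl
    have hset : {x : H | ∃ a b : K, x = T₁ a + T₂ b} = Set.range Φ := by
      ext x
      constructor
      · rintro ⟨a, b, rfl⟩; exact ⟨(a, b), rfl⟩
      · rintro ⟨⟨a, b⟩, rfl⟩; exact ⟨a, b, rfl⟩
    rw [hset]
    have hbound : ∀ p : K × K, ‖p‖ ≤ (⟨δ⁻¹, le_of_lt (inv_pos.mpr hδ)⟩ : NNReal) * ‖Φ p‖ := by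
      intro p
      have hmax : ‖p‖ = max ‖p.1‖ ‖p.2‖ := rfl
      have hNle : ‖p‖ ≤ Real.sqrt (‖p.1‖ ^ 2 + ‖p.2‖ ^ 2) := by
        rw [hmax]
        apply max_le
        · have := Real.sqrt_le_sqrt (show ‖p.1‖^2 ≤ ‖p.1‖^2 + ‖p.2‖^2 by
            nlinarith [sq_nonneg ‖p.2‖])
          rwa [Real.sqrt_sq (norm_nonneg _)] at this
        · have := Real.sqrt_le_sqrt (show ‖p.2‖^2 ≤ ‖p.1‖^2 + ‖p.2‖^2 by
            nlinarith [sq_nonneg ‖p.1‖])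
          rwa [Real.sqrt_sq (norm_nonneg _)] at this
      have hkey := key p.1 (-p.2)
      have heq : T₁ p.1 - T₂ (-p.2) = T₁ p.1 + T₂ p.2 := by
        rw [map_neg, sub_neg_eq_add]
      rw [heq] at hkey
      simp only [norm_neg] at hkey
      have : δ * ‖p‖ ≤ ‖Φ p‖ := by
        rw [hΦapp]
        calc δ * ‖p‖ ≤ δ * Real.sqrt (‖p.1‖ ^ 2 + ‖p.2‖ ^ 2) :=
          mul_le_mul_of_nonneg_left hNle (le_of_lt hδ)
        _ ≤ _ := hkey
      show ‖p‖ ≤ δ⁻¹ * ‖Φ p‖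
      calc ‖p‖ = δ⁻¹ * (δ * ‖p‖) := by field_simp
      _ ≤ δ⁻¹ * ‖Φ p‖ := mul_le_mul_of_nonneg_left this (by positivity)
    have hanti := ContinuousLinearMap.antilipschitz_of_bound Φ hbound
    exact hanti.isClosed_range Φ.uniformContinuous
end

section
/- Let S₁,…,S_n be isometries on a Hilbert space H with pairwise orthogonal ranges, and suppose X : ℓ²(F_n⁺) → H is a bounded operator satisfying S_iX = XL_i for 1 ≤ i ≤ n, where L_i are the left creation operators on the full Fock space ℓ²(F_n⁺). If X is bounded below (‖Xξ‖ ≥ c‖ξ‖ for some c > 0 and all ξ), then ⋂_{k≥1} Σ_{|w|=k} Ran(S_w restricted to Ran X) = {0}, i.e., the Cuntz part of the restriction of the S_i to the closure of Ran X vanishes. -/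
open scoped ContinuousLinearMap

/-- For a word `w = i₁…i_k` in the free monoid, `wordOp S w = S_{i₁} ⋯ S_{i_k}`. -/
noncomputable def wordOp {H : Type*} [NormedAddCommGroup H] [InnerProductSpace ℂ H]
    {n : ℕ} (S : Fin n → H →L[ℂ] H) (w : FreeMonoid (Fin n)) : H →L[ℂ] H :=
  ((FreeMonoid.toList w).map S).prod

open Topology

theorem wordOp_one {H : Type*} [NormedAddCommGroup H] [InnerProductSpace ℂ H]
    {n : ℕ} (S : Fin n → H →L[ℂ] H) : wordOp S 1 = 1 := rfl

theorem wordOp_of_mul {H : Type*} [NormedAddCommGroup H] [InnerProductSpace ℂ H]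
    {n : ℕ} (S : Fin n → H →L[ℂ] H) (i : Fin n) (w : FreeMonoid (Fin n)) :
    wordOp S (FreeMonoid.of i * w) = S i * wordOp S w := by
  simp [wordOp, FreeMonoid.toList_mul, FreeMonoid.toList_of]

/-- Let `S₁,…,Sₙ` be isometries on `H` with pairwise orthogonal ranges, and let
`X : ℓ²(𝔽ₙ⁺) → H` be a bounded operator with `SᵢX = XLᵢ`, where `Lᵢ` are the left creation
operators on the Fock space `ℓ²(𝔽ₙ⁺)` (modelled by a Hilbert basis indexed by the free
monoid).  If `X` is bounded below, then
`⋂_{k ≥ 1} Σ_{|w| = k} S_w (Ran X)⁻ = {0}`, i.e. the Cuntz part of the restriction of the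
`Sᵢ` to the closure of `Ran X` vanishes. -/
theorem stmt_8 {H K : Type*} [NormedAddCommGroup H] [InnerProductSpace ℂ H] [CompleteSpace H]
    [NormedAddCommGroup K] [InnerProductSpace ℂ K] [CompleteSpace K]
    {n : ℕ} (S : Fin n → H →L[ℂ] H)
    (hiso : ∀ i (x : H), ‖S i x‖ = ‖x‖)
    (horth : ∀ i j, i ≠ j → ∀ x y : H, (inner ℂ (S i x) (S j y) : ℂ) = 0)
    (e : HilbertBasis (FreeMonoid (Fin n)) ℂ K)
    (L : Fin n → K →L[ℂ] K)
    (hL : ∀ i (w : FreeMonoid (Fin n)), L i (e w) = e (FreeMonoid.of i * w))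
    (X : K →L[ℂ] H) (hX : ∀ i, S i ∘L X = X ∘L L i)
    (c : ℝ) (hc : 0 < c) (hbb : ∀ ξ : K, c * ‖ξ‖ ≤ ‖X ξ‖) :
    (⋂ (k : ℕ) (_ : 1 ≤ k),
      ((Submodule.span ℂ {y : H | ∃ w : FreeMonoid (Fin n), w.length = k ∧
          ∃ z ∈ closure (Set.range X), y = wordOp S w z}).topologicalClosure : Set H))
      = {0} := by
  classical
  -- X is a closed embedding
  have hanti : AntilipschitzWith (⟨c, hc.le⟩ : NNReal)⁻¹ X := by
    refine X.antilipschitz_of_bound fun x => ?_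
    show ‖x‖ ≤ (c : ℝ)⁻¹ * ‖X x‖
    rw [le_inv_mul_iff₀ hc]
    exact hbb x
  have hce : IsClosedEmbedding X := hanti.isClosedEmbedding X.uniformContinuous
  have hinj : Function.Injective X := hce.injective
  have hclr : IsClosed (Set.range X) := hce.isClosed_range
  have hclos : closure (Set.range X) = Set.range X := hclr.closure_eq
  -- intertwining for words
  have hXfun : ∀ i (ξ : K), S i (X ξ) = X (L i ξ) := by
    intro i ξ
    exact ContinuousLinearMap.ext_iff.mp (hX i) ξ
  have hXw : ∀ (w : FreeMonoid (Fin n)) (ξ : K), wordOp S w (X ξ) = X (wordOp L w ξ) := by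
    intro w
    induction w using FreeMonoid.inductionOn' with
    | one => intro ξ; simp [wordOp_one]
    | of_mul i w ih =>
      intro ξ
      rw [wordOp_of_mul, wordOp_of_mul, ContinuousLinearMap.mul_apply,
        ContinuousLinearMap.mul_apply, ih, hXfun]
  -- wordOp L on basis vectors
  have hLw : ∀ (w v : FreeMonoid (Fin n)), wordOp L w (e v) = e (w * v) := by
    intro w
    induction w using FreeMonoid.inductionOn' with
    | one => intro v; simp [wordOp_one]
    | of_mul i w ih =>
      intro v
      rw [wordOp_of_mul, ContinuousLinearMap.mul_apply, ih, hL, mul_assoc]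
  -- the subspaces N k in K
  set N : ℕ → Submodule ℂ K := fun k =>
    (Submodule.span ℂ {ξ : K | ∃ u : FreeMonoid (Fin n), k ≤ u.length ∧ ξ = e u}).topologicalClosure
    with hN
  -- wordOp L w maps into N k when length w = k
  have hwN : ∀ (w : FreeMonoid (Fin n)) (k : ℕ), w.length = k → ∀ ξ : K,
      wordOp L w ξ ∈ N k := by
    intro w k hk ξ
    have hcl : IsClosed ((N k : Set K)) := Submodule.isClosed_topologicalClosure _
    set P := Submodule.comap ((wordOp L w : K →L[ℂ] K) : K →ₗ[ℂ] K) (N k) with hP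
    have hPc : IsClosed (P : Set K) := hcl.preimage (wordOp L w).continuous
    have hrange : Set.range e ⊆ (P : Set K) := by
      rintro _ ⟨v, rfl⟩
      show wordOp L w (e v) ∈ N k
      rw [hLw]
      refine Submodule.le_topologicalClosure _ (Submodule.subset_span ?_)
      exact ⟨w * v, by simp [FreeMonoid.length_mul, hk], rfl⟩
    have hspan : Submodule.span ℂ (Set.range e) ≤ P := Submodule.span_le.mpr hrange
    have hle : (Submodule.span ℂ (Set.range e)).topologicalClosure ≤ P :=
      Submodule.topologicalClosure_minimal _ hspan hPc
    exact hle (by rw [e.dense_span]; trivial)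
  -- range of X as a closed submodule of H, and image of N k under X
  have hXNclosed : ∀ k, IsClosed (X '' (N k : Set K)) :=
    fun k => hce.isClosedMap _ (Submodule.isClosed_topologicalClosure _)
  -- M k ⊆ X '' N k
  have hMk : ∀ k, ((Submodule.span ℂ {y : H | ∃ w : FreeMonoid (Fin n), w.length = k ∧
      ∃ z ∈ closure (Set.range X), y = wordOp S w z}).topologicalClosure : Set H)
      ⊆ X '' (N k : Set K) := by
    intro k
    have himg : X '' (N k : Set K) = ((N k).map (X : K →ₗ[ℂ] H) : Set H) := by
      rw [Submodule.map_coe]; rfl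
    rw [himg]
    have hgen : {y : H | ∃ w : FreeMonoid (Fin n), w.length = k ∧
        ∃ z ∈ closure (Set.range X), y = wordOp S w z} ⊆ ((N k).map (X : K →ₗ[ℂ] H) : Set H) := by
      rintro y ⟨w, hwk, z, hz, rfl⟩
      rw [hclos] at hz
      obtain ⟨ξ, rfl⟩ := hz
      refine ⟨wordOp L w ξ, hwN w k hwk ξ, (hXw w ξ).symm⟩
    have hspan : Submodule.span ℂ {y : H | ∃ w : FreeMonoid (Fin n), w.length = k ∧
        ∃ z ∈ closure (Set.range X), y = wordOp S w z} ≤ (N k).map (X : K →ₗ[ℂ] H) :=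
      Submodule.span_le.mpr hgen
    have : (Submodule.span ℂ {y : H | ∃ w : FreeMonoid (Fin n), w.length = k ∧
        ∃ z ∈ closure (Set.range X), y = wordOp S w z}).topologicalClosure
        ≤ (N k).map (X : K →ₗ[ℂ] H) := by
      refine Submodule.topologicalClosure_minimal _ hspan ?_
      rw [← himg]
      exact hXNclosed k
    exact this
  -- intersection of the N k is 0
  have hNinter : ∀ ξ : K, (∀ k, 1 ≤ k → ξ ∈ N k) → ξ = 0 := by
    intro ξ hξ
    have hcoef : ∀ u : FreeMonoid (Fin n), (inner ℂ (e u) ξ : ℂ) = 0 := by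
      intro u
      have hm := hξ (u.length + 1) (Nat.le_add_left 1 _)
      -- N (len u + 1) ⊥ e u
      have hperp : N (u.length + 1) ≤ (ℂ ∙ (e u : K))ᗮ := by
        refine Submodule.topologicalClosure_minimal _ ?_ (Submodule.isClosed_orthogonal _)
        refine Submodule.span_le.mpr ?_
        rintro _ ⟨v, hv, rfl⟩
        intro y hy
        rcases Submodule.mem_span_singleton.mp hy with ⟨a, rfl⟩
        have huv : u ≠ v := by
          intro h; rw [h] at hv; omega
        have horth' : (inner ℂ (e u : K) (e v) : ℂ) = 0 := e.orthonormal.2 huv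
        rw [inner_smul_left, horth', mul_zero]
      have := hperp hm (e u) (Submodule.mem_span_singleton_self _)
      simpa using this
    have : e.repr ξ = 0 := by
      ext u
      rw [e.repr_apply_apply]
      simpa using hcoef u
    have := congrArg e.repr.symm this
    simpa using this
  -- finish
  apply Set.eq_singleton_iff_unique_mem.mpr
  constructor
  · refine Set.mem_iInter.mpr fun k => Set.mem_iInter.mpr fun hk => ?_
    exact Submodule.zero_mem _
  · intro x hx
    simp only [Set.mem_iInter] at hx
    -- x ∈ X '' N 1, so x = X ξ₀
    obtain ⟨ξ₀, hξ₀, rfl⟩ := hMk 1 (hx 1 le_rfl)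
    have hξmem : ∀ k, 1 ≤ k → ξ₀ ∈ N k := by
      intro k hk
      obtain ⟨ξ, hξ, hXξ⟩ := hMk k (hx k hk)
      have : ξ = ξ₀ := hinj hXξ
      rwa [this] at hξ
    rw [hNinter ξ₀ hξmem, map_zero]
end
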